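/- arXiv:1708.09211 — 3 statements merged into one kernel-verified Lean document; each statement's English description precedes it below -/
import Mathlib

section
/- Let X_1, X_2, ... be i.i.d. random vectors taking values in K having a Lebesgue density f. Suppose there exist ε > 0 and a ball S ⊆ K such that f(x) ≤ 1 − ε for every x ∈ S. Then for every real constant c, lim_{n→∞} P( n V_n − log n − (d−1) log log n > c ) = 1; in particular, for the critical values c_{n,α} = (g_{1−α} + log n + (d−1) log log n + β)/n with arbitrary fixed real constants g_{1−α} and β, one has lim_{n→∞} P( V_n > c_{n,α} ) = 1, i.e., the maximum spacings test for uniformity is consistent against every such alternative. -/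
open MeasureTheory Filter

open Pointwise

section Aux

lemma second_moment {Ω : Type*} [MeasurableSpace Ω] (P : Measure Ω) [IsProbabilityMeasure P]
    {ι : Type*} (s : Finset ι) (E : ι → Set Ω) (hE : ∀ j, MeasurableSet (E j))
    (hpair : ∀ j ∈ s, ∀ k ∈ s, j ≠ k →
      (P (E j ∩ E k)).toReal ≤ (P (E j)).toReal * (P (E k)).toReal) :
    (P (⋂ j ∈ s, (E j)ᶜ)).toReal * (∑ j ∈ s, (P (E j)).toReal)^2
      ≤ ∑ j ∈ s, (P (E j)).toReal := by
  classical
  set S : ℝ := ∑ j ∈ s, (P (E j)).toReal with hS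
  set Z : Ω → ℝ := fun ω => ∑ j ∈ s, (E j).indicator (fun _ => (1:ℝ)) ω with hZ
  have hint : ∀ j : ι, Integrable ((E j).indicator (fun _ => (1:ℝ))) P :=
    fun j => (integrable_const (1:ℝ)).indicator (hE j)
  have hintp : ∀ j k : ι, Integrable ((E j ∩ E k).indicator (fun _ => (1:ℝ))) P :=
    fun j k => (integrable_const (1:ℝ)).indicator ((hE j).inter (hE k))
  have hZint : Integrable Z P := integrable_finset_sum _ (fun j _ => hint j)
  have hEZ : ∫ ω, Z ω ∂P = S := by
    rw [hZ, integral_finset_sum _ (fun j _ => hint j)]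
    refine Finset.sum_congr rfl (fun j _ => ?_)
    rw [integral_indicator_const (1:ℝ) (hE j)]; simp [Measure.real]
  have hZsq : ∀ ω, Z ω ^ 2 = ∑ j ∈ s, ∑ k ∈ s,
      (E j ∩ E k).indicator (fun _ => (1:ℝ)) ω := by
    intro ω
    rw [sq, hZ, Finset.sum_mul_sum]
    refine Finset.sum_congr rfl (fun j _ => Finset.sum_congr rfl (fun k _ => ?_))
    rw [← Set.inter_indicator_mul]
    norm_num
  have hZsqint : Integrable (fun ω => Z ω ^ 2) P := by
    have h := integrable_finset_sum (μ := P) s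
      (f := fun j ω => ∑ k ∈ s, (E j ∩ E k).indicator (fun _ => (1:ℝ)) ω)
      (fun j _ => integrable_finset_sum _ (fun k _ => hintp j k))
    exact h.congr (Eventually.of_forall (fun ω => (hZsq ω).symm))
  have hEZsq : ∫ ω, Z ω ^ 2 ∂P ≤ S + S^2 := by
    have h1 : ∫ ω, Z ω ^ 2 ∂P = ∑ j ∈ s, ∑ k ∈ s, (P (E j ∩ E k)).toReal := by
      rw [integral_congr_ae (Eventually.of_forall hZsq),
        integral_finset_sum _ (fun j _ => integrable_finset_sum _ (fun k _ => hintp j k))]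
      refine Finset.sum_congr rfl (fun j _ => ?_)
      rw [integral_finset_sum _ (fun k _ => hintp j k)]
      refine Finset.sum_congr rfl (fun k _ => ?_)
      rw [integral_indicator_const (1:ℝ) ((hE j).inter (hE k))]; simp [Measure.real]
    rw [h1]
    have key : ∀ j ∈ s, ∀ k ∈ s, (P (E j ∩ E k)).toReal ≤
        (if j = k then (P (E j)).toReal else 0) + (P (E j)).toReal * (P (E k)).toReal := by
      intro j hj k hk
      by_cases h : j = k
      · subst h
        have h0 : (0:ℝ) ≤ (P (E j)).toReal * (P (E j)).toReal :=
          mul_nonneg ENNReal.toReal_nonneg ENNReal.toReal_nonneg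
        simp only [Set.inter_self]
        split_ifs with h'
        · linarith
        · exact absurd trivial h'
      · simpa [h] using hpair j hj k hk h
    calc ∑ j ∈ s, ∑ k ∈ s, (P (E j ∩ E k)).toReal
        ≤ ∑ j ∈ s, ∑ k ∈ s, ((if j = k then (P (E j)).toReal else 0)
            + (P (E j)).toReal * (P (E k)).toReal) :=
          Finset.sum_le_sum (fun j hj => Finset.sum_le_sum (fun k hk => key j hj k hk))
      _ = S + S^2 := by
          simp only [Finset.sum_add_distrib]
          rw [← Finset.sum_mul_sum]
          congr 1
          · refine Finset.sum_congr rfl (fun j hj => ?_)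
            rw [Finset.sum_ite_eq s j (fun _ => (P (E j)).toReal), if_pos hj]
          · rw [sq]
  -- the set where Z = 0
  set D : Set Ω := ⋂ j ∈ s, (E j)ᶜ with hD
  have hDmeas : MeasurableSet D := MeasurableSet.biInter s.countable_toSet (fun j _ => (hE j).compl)
  have hZ0 : ∀ ω ∈ D, Z ω = 0 := by
    intro ω hω
    rw [hZ]
    refine Finset.sum_eq_zero (fun j hj => ?_)
    have : ω ∈ (E j)ᶜ := by
      simp only [hD, Set.mem_iInter] at hω; exact hω j hj
    simp [Set.indicator_of_notMem this]
  have hA : Integrable (fun ω => S^2 - 2*S*Z ω) P := by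
    have := (integrable_const (μ := P) (S^2)).sub (hZint.const_mul (2*S))
    exact this
  have hWint : Integrable (fun ω => (S - Z ω)^2) P := by
    have : (fun ω => (S - Z ω)^2) = fun ω => (S^2 - 2*S*Z ω) + Z ω^2 := by
      funext ω; ring
    rw [this]
    exact hA.add hZsqint
  have hset : ∫ ω in D, (S - Z ω)^2 ∂P = (P D).toReal * S^2 := by
    rw [setIntegral_congr_fun hDmeas (fun ω hω => by rw [hZ0 ω hω, sub_zero])]
    rw [setIntegral_const]
    simp [smul_eq_mul, Measure.real]
  have hle : ∫ ω in D, (S - Z ω)^2 ∂P ≤ ∫ ω, (S - Z ω)^2 ∂P :=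
    setIntegral_le_integral hWint (Eventually.of_forall (fun ω => sq_nonneg _))
  have hfull : ∫ ω, (S - Z ω)^2 ∂P ≤ S := by
    have hexp : ∫ ω, (S - Z ω)^2 ∂P = S^2 - 2*S*S + ∫ ω, Z ω^2 ∂P := by
      have heq : (fun ω => (S - Z ω)^2) = fun ω => (S^2 - 2*S*Z ω) + Z ω^2 := by
        funext ω; ring
      rw [heq, integral_add hA hZsqint,
        integral_sub (integrable_const (S^2)) (hZint.const_mul (2*S)),
        integral_const, integral_const_mul, hEZ]
      simp [measure_univ]
    rw [hexp]
    nlinarith [hEZsq]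
  calc (P D).toReal * S^2 = ∫ ω in D, (S - Z ω)^2 ∂P := hset.symm
    _ ≤ ∫ ω, (S - Z ω)^2 ∂P := hle
    _ ≤ S := hfull

lemma vol_translate {d : ℕ} (x : Fin d → ℝ) {r : ℝ} (hr : 0 ≤ r) (B : Set (Fin d → ℝ)) :
    volume ((fun y => x + r • y) '' B) = ENNReal.ofReal (r ^ d) * volume B := by
  have h1 : (fun y : Fin d → ℝ => x + r • y) '' B
      = (fun y => x + y) '' ((fun y : Fin d → ℝ => r • y) '' B) := by
    rw [Set.image_image]
  rw [h1, Set.image_add_left, measure_preimage_add]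
  have h2 : (fun y : Fin d → ℝ => r • y) '' B = r • B := rfl
  rw [h2, Measure.addHaar_smul_of_nonneg volume hr B, Module.finrank_fin_fun]

lemma cell_prob {d : ℕ} {Ω : Type*} [MeasurableSpace Ω] (P : Measure Ω) [IsProbabilityMeasure P]
    (X : ℕ → Ω → (Fin d → ℝ)) (hXmeas : ∀ i, Measurable (X i))
    (hXindep : ProbabilityTheory.iIndepFun X P)
    (ν : Measure (Fin d → ℝ)) [IsProbabilityMeasure ν]
    (hXf : ∀ i, Measure.map (X i) P = ν)
    (n : ℕ) (C : Set (Fin d → ℝ)) (hC : MeasurableSet C) :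
    (P (⋂ i ∈ Finset.Icc 1 n, X i ⁻¹' Cᶜ)).toReal = (1 - (ν C).toReal) ^ n := by
  have hmeas : ∀ i ∈ Finset.Icc 1 n,
      MeasurableSet[MeasurableSpace.comap (X i) inferInstance] (X i ⁻¹' Cᶜ) :=
    fun i _ => ⟨Cᶜ, hC.compl, rfl⟩
  rw [hXindep.meas_biInter hmeas]
  have hfac : ∀ i, P (X i ⁻¹' Cᶜ) = 1 - ν C := by
    intro i
    rw [← Measure.map_apply (hXmeas i) hC.compl, hXf i,
      measure_compl hC (measure_ne_top ν C), measure_univ]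
  simp only [hfac]
  rw [Finset.prod_const, Nat.card_Icc]
  simp only [Nat.add_sub_cancel]
  rw [ENNReal.toReal_pow, ENNReal.toReal_sub_of_le prob_le_one ENNReal.one_ne_top]
  simp

lemma density_le {d : ℕ} (f : (Fin d → ℝ) → ℝ) {C S : Set (Fin d → ℝ)}
    (hC : MeasurableSet C) (hCS : C ⊆ S) (M : ℝ) (hf : ∀ x ∈ S, f x ≤ M) :
    (volume.withDensity (fun x => ENNReal.ofReal (f x))) C
      ≤ ENNReal.ofReal M * volume C := by
  rw [withDensity_apply _ hC]
  calc ∫⁻ x in C, ENNReal.ofReal (f x) ∂volume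
      ≤ ∫⁻ _ in C, ENNReal.ofReal M ∂volume :=
        setLIntegral_mono measurable_const
          (fun x hx => ENNReal.ofReal_le_ofReal (hf x (hCS hx)))
    _ = ENNReal.ofReal M * volume C := setLIntegral_const _ _

lemma exp_le_one_sub {q : ℝ} (h0 : 0 ≤ q) (h1 : q < 1) :
    Real.exp (-(q/(1-q))) ≤ 1 - q := by
  have h1' : 0 < 1 - q := by linarith
  have h2 := Real.add_one_le_exp (q/(1-q))
  have h3 : 1/(1-q) ≤ Real.exp (q/(1-q)) := by
    have : q/(1-q) + 1 = 1/(1-q) := by field_simp; ring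
    linarith
  rw [Real.exp_neg]
  calc (Real.exp (q/(1-q)))⁻¹ ≤ (1/(1-q))⁻¹ := by
        apply inv_anti₀ (by positivity) h3
    _ = 1 - q := by field_simp

lemma tendsto_g {b c C εh : ℝ} (hb : 0 ≤ b) (hC : 0 < C) (hεh : 0 < εh) :
    Tendsto (fun u : ℝ => (u + b * Real.log u + c)
      * Real.exp (-εh*u + (1-εh)*(b*Real.log u + c)) / C) atTop (nhds 0) := by
  set s := (1-εh)*b with hs
  set K := (1 + b + |c|) * Real.exp ((1-εh)*c) / C with hK
  have hmain := (tendsto_rpow_mul_exp_neg_mul_atTop_nhds_zero (s+1) εh hεh).const_mul K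
  rw [mul_zero] at hmain
  apply tendsto_of_tendsto_of_tendsto_of_le_of_le' tendsto_const_nhds hmain
  · filter_upwards [eventually_ge_atTop (max 1 (|c|+1))] with u hu
    have hu1 : 1 ≤ u := le_trans (le_max_left _ _) hu
    have hlog : 0 ≤ Real.log u := Real.log_nonneg hu1
    have hnum : 0 ≤ u + b*Real.log u + c := by
      have h2 : |c| + 1 ≤ u := le_trans (le_max_right _ _) hu
      have h3 := neg_abs_le c
      nlinarith [mul_nonneg hb hlog]
    positivity
  · filter_upwards [eventually_ge_atTop (max 1 (|c|+1))] with u hu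
    have hu1 : 1 ≤ u := le_trans (le_max_left _ _) hu
    have hu0 : 0 < u := lt_of_lt_of_le one_pos hu1
    have hlog : 0 ≤ Real.log u := Real.log_nonneg hu1
    have hexp : Real.exp (-εh*u + (1-εh)*(b*Real.log u + c))
        = u ^ s * Real.exp ((1-εh)*c) * Real.exp (-εh*u) := by
      rw [Real.rpow_def_of_pos hu0, ← Real.exp_add, ← Real.exp_add]
      congr 1
      rw [hs]; ring
    have hnum : u + b*Real.log u + c ≤ (1 + b + |c|) * u := by
      have h2 : Real.log u ≤ u := by
        have := Real.log_le_sub_one_of_pos hu0; linarith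
      have h3 : c ≤ |c| * u := by
        have := le_abs_self c
        nlinarith [abs_nonneg c]
      nlinarith [mul_le_mul_of_nonneg_left h2 hb]
    calc (u + b * Real.log u + c) * Real.exp (-εh*u + (1-εh)*(b*Real.log u + c)) / C
        = (u + b * Real.log u + c) * (u ^ s * Real.exp ((1-εh)*c) * Real.exp (-εh*u)) / C := by
          rw [hexp]
      _ ≤ ((1 + b + |c|) * u) * (u ^ s * Real.exp ((1-εh)*c) * Real.exp (-εh*u)) / C := by
          gcongr
      _ = K * (u ^ (s+1) * Real.exp (-εh*u)) := by
          rw [Real.rpow_add hu0, Real.rpow_one, hK]; ring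

lemma tendsto_F {b c C εh : ℝ} (hb : 0 ≤ b) (hC : 0 < C) (hεh : 0 < εh) :
    Tendsto (fun n : ℕ => (Real.log n + b * Real.log (Real.log n) + c)
      * Real.exp ((1 - εh) * (Real.log n + b * Real.log (Real.log n) + c)) / (C * n))
      atTop (nhds 0) := by
  have hg := (tendsto_g (c := c) hb hC hεh).comp (Real.tendsto_log_atTop.comp tendsto_natCast_atTop_atTop)
  apply hg.congr'
  filter_upwards [eventually_ge_atTop 1] with n hn
  have hnpos : (0:ℝ) < n := by exact_mod_cast hn
  have hexp : Real.exp (Real.log n) = n := Real.exp_log hnpos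
  show (Real.log n + b * Real.log (Real.log n) + c)
      * Real.exp (-εh*(Real.log n) + (1-εh)*(b*Real.log (Real.log n) + c)) / C
    = (Real.log n + b * Real.log (Real.log n) + c)
      * Real.exp ((1 - εh) * (Real.log n + b * Real.log (Real.log n) + c)) / (C * n)
  have key : Real.exp ((1 - εh) * (Real.log n + b * Real.log (Real.log n) + c))
      = Real.exp (-εh*(Real.log n) + (1-εh)*(b*Real.log (Real.log n) + c)) * n := by
    rw [show ((1 - εh) * (Real.log (n:ℝ) + b * Real.log (Real.log (n:ℝ)) + c))
        = (-εh*(Real.log (n:ℝ)) + (1-εh)*(b*Real.log (Real.log (n:ℝ)) + c)) + Real.log (n:ℝ)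
        from by ring, Real.exp_add, hexp]
  rw [key]
  field_simp
end Aux

/-- The maximum spacing generated by the point set `Q` within `K`, with respect to the
reference set `A`: the supremum of all `r ≥ 0` such that some translate of `r • A`
is contained in `K` and avoids every point of `Q`. -/
noncomputable def maxSpacing (d : ℕ) (K A Q : Set (Fin d → ℝ)) : ℝ :=
  sSup {r : ℝ | 0 ≤ r ∧ ∃ x : Fin d → ℝ, (fun y => x + r • y) '' A ⊆ K \ Q}

set_option maxHeartbeats 2000000 in
/-- Consistency of the maximum spacings test for multivariate uniformity:
if the i.i.d. sample `X₁, X₂, …` has a Lebesgue density `f` which satisfies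
`f ≤ 1 - ε` on some ball contained in `K`, then for every real `c`,
`P(n Vₙ − log n − (d−1) log log n > c) → 1`, and in particular
`P(Vₙ > c_{n,α}) → 1` for the critical values `c_{n,α}`. -/
theorem spacings_test_consistent
    (d : ℕ) (hd : 1 ≤ d)
    (K A : Set (Fin d → ℝ))
    (hKb : Bornology.IsBounded K) (hKvol : volume K = 1)
    (hKfr : volume (frontier K) = 0)
    (hAb : Bornology.IsBounded A) (hAconv : Convex ℝ A)
    (hAint : (interior A).Nonempty) (hAvol : volume A = 1)
    {Ω : Type*} [MeasurableSpace Ω] (P : Measure Ω) [IsProbabilityMeasure P]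
    (X : ℕ → Ω → (Fin d → ℝ)) (hXmeas : ∀ i, Measurable (X i))
    (hXK : ∀ i ω, X i ω ∈ K)
    (hXindep : ProbabilityTheory.iIndepFun X P)
    (f : (Fin d → ℝ) → ℝ) (hfm : Measurable f)
    (hXf : ∀ i, Measure.map (X i) P = volume.withDensity (fun x => ENNReal.ofReal (f x)))
    (ε : ℝ) (hε : 0 < ε)
    (z : Fin d → ℝ) (ρ : ℝ) (hρ : 0 < ρ) (hSK : Metric.closedBall z ρ ⊆ K)
    (hfS : ∀ x ∈ Metric.closedBall z ρ, f x ≤ 1 - ε)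
    (V : ℕ → Ω → ℝ)
    (hV : ∀ n ω, V n ω = (maxSpacing d K A ((fun i => X i ω) '' Set.Icc 1 n)) ^ d) :
    (∀ c : ℝ, Tendsto (fun n : ℕ =>
        P {ω | c < (n : ℝ) * V n ω - Real.log n - ((d : ℝ) - 1) * Real.log (Real.log n)})
      atTop (nhds 1)) ∧
    (∀ g β : ℝ, Tendsto (fun n : ℕ =>
        P {ω | (g + Real.log n + ((d : ℝ) - 1) * Real.log (Real.log n) + β) / n < V n ω})
      atTop (nhds 1)) := by
  classical
  have hdpos : (0:ℝ) < d := by exact_mod_cast hd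
  -- replace ε by ε' ≤ 1/2
  set ε' : ℝ := min ε (1/2) with hε'def
  have hε'pos : 0 < ε' := lt_min hε (by norm_num)
  have hε'half : ε' ≤ 1/2 := min_le_right _ _
  have hfS' : ∀ x ∈ Metric.closedBall z ρ, f x ≤ 1 - ε' := fun x hx =>
    le_trans (hfS x hx) (by have := min_le_left ε (1/2); linarith)
  -- the density measure
  set ν : Measure (Fin d → ℝ) := volume.withDensity (fun x => ENNReal.ofReal (f x)) with hνdef
  haveI hνprob : IsProbabilityMeasure ν := by
    rw [← hXf 0]; exact Measure.isProbabilityMeasure_map (hXmeas 0).aemeasurable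
  -- geometry of A
  have hAsub : interior A ⊆ A := interior_subset
  obtain ⟨a₀, ha₀⟩ := hAint
  have ha₀A : a₀ ∈ A := hAsub ha₀
  set Abar : Set (Fin d → ℝ) := closure A with hAbar
  have hAbarconv : Convex ℝ Abar := hAconv.closure
  have hAbarclosed : IsClosed Abar := isClosed_closure
  have hAbarbdd : Bornology.IsBounded Abar := hAb.closure
  have hAbarcpt : IsCompact Abar := Metric.isCompact_of_isClosed_isBounded hAbarclosed hAbarbdd
  have hAbarvol : volume Abar = 1 := by
    apply le_antisymm
    · calc volume Abar ≤ volume (A ∪ frontier A) := by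
            apply measure_mono
            intro x hx
            by_cases hxA : x ∈ A
            · exact Or.inl hxA
            · exact Or.inr ⟨hx, fun hi => hxA (interior_subset hi)⟩
        _ ≤ volume A + volume (frontier A) := measure_union_le _ _
        _ = 1 := by rw [hAvol, hAconv.addHaar_frontier volume, add_zero]
    · rw [← hAvol]; exact measure_mono subset_closure
  -- bounding ball for Abar
  obtain ⟨L₀, hL₀⟩ := hAbarbdd.subset_closedBall a₀
  set L : ℝ := max L₀ 1 with hLdef
  have hL1 : (1:ℝ) ≤ L := le_max_right _ _
  have hLpos : (0:ℝ) < L := lt_of_lt_of_le one_pos hL1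
  have hAbarL : Abar ⊆ Metric.closedBall a₀ L :=
    hL₀.trans (Metric.closedBall_subset_closedBall (le_max_left _ _))
  -- a second point of A at distance δ/2 from a₀
  obtain ⟨δ, hδpos, hδball⟩ := Metric.isOpen_iff.mp isOpen_interior a₀ ha₀
  set e1 : Fin d → ℝ := fun _ => (1:ℝ) with he1
  haveI : Nonempty (Fin d) := ⟨⟨0, hd⟩⟩
  have he1norm : ‖e1‖ = 1 := by
    rw [he1, pi_norm_const (1:ℝ), norm_one]
  set b₀ : Fin d → ℝ := a₀ + (δ/2) • e1 with hb₀
  have hb₀A : b₀ ∈ A := by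
    apply hAsub
    apply hδball
    rw [Metric.mem_ball, dist_eq_norm, hb₀]
    have : a₀ + (δ/2) • e1 - a₀ = (δ/2) • e1 := by abel
    rw [this, norm_smul, he1norm]
    rw [Real.norm_eq_abs, abs_of_pos (by linarith), mul_one]
    linarith
  have hab : dist a₀ b₀ = δ/2 := by
    rw [dist_eq_norm, hb₀]
    have : a₀ - (a₀ + (δ/2) • e1) = -((δ/2) • e1) := by abel
    rw [this, norm_neg, norm_smul, he1norm, Real.norm_eq_abs, abs_of_pos (by linarith), mul_one]
  -- bounded K: uniform bound on max spacing sets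
  obtain ⟨RK, hRK⟩ := Metric.isBounded_iff.mp hKb
  have hbdd : ∀ Q : Set (Fin d → ℝ),
      BddAbove {r : ℝ | 0 ≤ r ∧ ∃ x : Fin d → ℝ, (fun y => x + r • y) '' A ⊆ K \ Q} := by
    intro Q
    refine ⟨RK / (δ/2), fun r hr => ?_⟩
    obtain ⟨hr0, x, hx⟩ := hr
    have h1 : x + r • a₀ ∈ K := (hx ⟨a₀, ha₀A, rfl⟩).1
    have h2 : x + r • b₀ ∈ K := (hx ⟨b₀, hb₀A, rfl⟩).1
    have h3 : dist (x + r • a₀) (x + r • b₀) ≤ RK := hRK h1 h2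
    have h4 : dist (x + r • a₀) (x + r • b₀) = r * (δ/2) := by
      rw [dist_eq_norm]
      have : (x + r • a₀) - (x + r • b₀) = r • (a₀ - b₀) := by
        rw [smul_sub]; abel
      rw [this, norm_smul, Real.norm_eq_abs, abs_of_nonneg hr0, ← dist_eq_norm, hab]
    rw [h4] at h3
    rw [le_div_iff₀ (by linarith : (0:ℝ) < δ/2)]
    linarith

  -- ========== PART 1 ==========
  have key : ∀ c : ℝ, Tendsto (fun n : ℕ =>
      P {ω | c < (n : ℝ) * V n ω - Real.log n - ((d : ℝ) - 1) * Real.log (Real.log n)})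
      atTop (nhds 1) := by
    intro c
    set b : ℝ := (d:ℝ) - 1 with hbdef
    have hb : 0 ≤ b := by
      have : (1:ℝ) ≤ (d:ℝ) := by exact_mod_cast hd
      simp only [hbdef]; linarith
    set t : ℕ → ℝ := fun n => Real.log n + b * Real.log (Real.log n) + (c+1) with htdef
    set r : ℕ → ℝ := fun n => (t n / n) ^ ((d:ℝ)⁻¹) with hrdef
    set Cst : ℝ := (ρ/(6*L))^d with hCstdef
    have hCstpos : 0 < Cst := pow_pos (by positivity) d
    set F : ℕ → ℝ := fun n => t n * Real.exp ((1 - ε'/2) * t n) / (Cst * n) with hFdef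
    have hFlim : Tendsto F atTop (nhds 0) := tendsto_F hb hCstpos (by linarith)
    have hloglim : Tendsto (fun n : ℕ => Real.log n) atTop atTop :=
      Real.tendsto_log_atTop.comp tendsto_natCast_atTop_atTop
    have htlim : Tendsto t atTop atTop := by
      apply tendsto_atTop_mono' atTop (f₁ := fun n : ℕ => Real.log n + (c+1))
      · filter_upwards [hloglim.eventually_ge_atTop 1] with n hn
        have h1 : 0 ≤ Real.log (Real.log n) := Real.log_nonneg hn
        have h2 := mul_nonneg hb h1
        simp only [htdef]; linarith
      · exact tendsto_atTop_add_const_right _ _ hloglim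
    have hlogdiv : Tendsto (fun n : ℕ => Real.log n / n) atTop (nhds 0) :=
      (Real.isLittleO_log_id_atTop.tendsto_div_nhds_zero).comp tendsto_natCast_atTop_atTop
    have hloglogdiv : Tendsto (fun n : ℕ => Real.log (Real.log n) / n) atTop (nhds 0) := by
      apply tendsto_of_tendsto_of_tendsto_of_le_of_le' tendsto_const_nhds hlogdiv
      · filter_upwards [hloglim.eventually_ge_atTop 1, eventually_ge_atTop 1] with n hn hn1
        have hnpos : (0:ℝ) < n := by exact_mod_cast hn1
        exact div_nonneg (Real.log_nonneg hn) hnpos.le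
      · filter_upwards [hloglim.eventually_ge_atTop 1, eventually_ge_atTop 1] with n hn hn1
        have hnpos : (0:ℝ) < n := by exact_mod_cast hn1
        exact (div_le_div_iff_of_pos_right hnpos).mpr (Real.log_le_self (by linarith))
    have htn : Tendsto (fun n : ℕ => t n / n) atTop (nhds 0) := by
      have h := (hlogdiv.add (hloglogdiv.const_mul b)).add
        (tendsto_const_div_atTop_nhds_zero_nat (c+1))
      rw [show (0:ℝ) + b * 0 + 0 = 0 by ring] at h
      apply h.congr
      intro n
      simp only [htdef]
      ring
    have hrlim : Tendsto r atTop (nhds 0) := by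
      have hcont : ContinuousAt (fun x : ℝ => x ^ ((d:ℝ)⁻¹)) 0 :=
        Real.continuousAt_rpow_const 0 _ (Or.inr (by positivity))
      have h := hcont.tendsto.comp htn
      rw [Real.zero_rpow (by positivity)] at h
      exact h
    -- main eventual bound
    have hmain : ∀ n : ℕ, 1 ≤ t n → |t n| / n < ε'/4 → |r n| < ρ/(6*L) → 1 ≤ n →
        ENNReal.ofReal (1 - F n) ≤
          P {ω | c < (n : ℝ) * V n ω - Real.log n - b * Real.log (Real.log n)} := by
      intro n ht1 htq hrb hn1
      have hnpos : (0:ℝ) < n := by exact_mod_cast hn1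
      have htpos : (0:ℝ) < t n := by linarith
      have htnpos : (0:ℝ) < t n / n := div_pos htpos hnpos
      have hrpos : 0 < r n := Real.rpow_pos_of_pos htnpos _
      have hrne : r n ≠ 0 := ne_of_gt (Real.rpow_pos_of_pos (div_pos (by linarith) (by exact_mod_cast hn1)) _)
      have hLne : L ≠ 0 := hLpos.ne'
      have htne : t n ≠ 0 := by positivity
      have hnne : (n:ℝ) ≠ 0 := by positivity
      have hCstne : Cst ≠ 0 := hCstpos.ne'
      have hrd : r n ^ d = t n / n := by
        rw [hrdef]
        rw [← Real.rpow_natCast ((t n / n) ^ ((d:ℝ)⁻¹)) d, ← Real.rpow_mul htnpos.le,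
          inv_mul_cancel₀ (by positivity : (d:ℝ) ≠ 0), Real.rpow_one]
      have hrL : r n * L < ρ/6 := by
        rw [abs_of_pos hrpos, lt_div_iff₀ (by positivity : (0:ℝ) < 6*L)] at hrb
        rw [lt_div_iff₀ (by norm_num : (0:ℝ) < 6)]
        nlinarith
      have hrL2 : r n * L ≤ ρ/2 := by linarith
      have hrLpos : 0 < r n * L := mul_pos hrpos hLpos
      set q : ℝ := (1-ε') * (t n / n) with hqdef
      have hq0 : 0 ≤ q := mul_nonneg (by linarith) htnpos.le
      have hq4 : q ≤ ε'/4 := by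
        rw [abs_of_pos htpos] at htq
        calc q ≤ 1 * (t n / n) := by
              apply mul_le_mul_of_nonneg_right (by linarith) htnpos.le
          _ = t n / n := one_mul _
          _ ≤ ε'/4 := htq.le
      have hq1 : q < 1 := by linarith
      set x : ℝ := ρ/(3 * r n * L) with hxdef
      have hx2 : 2 ≤ x := by
        rw [hxdef, le_div_iff₀ (by positivity)]
        linarith
      set m : ℕ := ⌊x⌋₊ with hmdef
      have hm1 : 1 ≤ m := Nat.le_floor (by exact_mod_cast (by linarith : (1:ℝ) ≤ x))
      have hmx : (m:ℝ) ≤ x := Nat.floor_le (by linarith)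
      have hmge : x/2 ≤ (m:ℝ) := by
        have := Nat.sub_one_lt_floor x
        rw [← hmdef] at this
        linarith
      have h3rLm : (m:ℝ) * (3 * r n * L) ≤ ρ := by
        have h := hmx
        rw [hxdef, le_div_iff₀ (by positivity)] at h
        linarith
      -- cells
      set w : (Fin d → Fin m) → (Fin d → ℝ) :=
        fun k i => z i - ρ/2 + 3 * r n * L * ((k i : ℕ) : ℝ) with hwdef
      set T : (Fin d → Fin m) → Set (Fin d → ℝ) :=
        fun k => (fun y => (w k - r n • a₀) + r n • y) '' Abar with hTdef
      have hTcpt : ∀ k, IsCompact (T k) :=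
        fun k => hAbarcpt.image (continuous_const.add (continuous_id.const_smul (r n)))
      have hTmeas : ∀ k, MeasurableSet (T k) := fun k => (hTcpt k).isClosed.measurableSet
      have hTball : ∀ k, T k ⊆ Metric.closedBall (w k) (r n * L) := by
        rintro k _ ⟨y, hy, rfl⟩
        rw [Metric.mem_closedBall, dist_eq_norm]
        have heq : (w k - r n • a₀ + r n • y) - w k = r n • (y - a₀) := by
          rw [smul_sub]; abel
        rw [heq, norm_smul, Real.norm_eq_abs, abs_of_pos hrpos]
        have : ‖y - a₀‖ ≤ L := by
          rw [← dist_eq_norm]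
          exact Metric.mem_closedBall.mp (hAbarL hy)
        exact mul_le_mul_of_nonneg_left this hrpos.le
      have hwz : ∀ k, dist (w k) z ≤ ρ - r n * L := by
        intro k
        rw [dist_pi_le_iff (by linarith)]
        intro i
        have hki : ((k i : ℕ) : ℝ) ≤ (m:ℝ) - 1 := by
          have h := (k i).isLt
          have : ((k i : ℕ) : ℝ) + 1 ≤ (m:ℝ) := by exact_mod_cast Nat.succ_le_of_lt h
          linarith
        have hki0 : (0:ℝ) ≤ ((k i : ℕ) : ℝ) := Nat.cast_nonneg _
        rw [Real.dist_eq]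
        have hw : w k i - z i = -(ρ/2) + 3 * r n * L * ((k i : ℕ) : ℝ) := by
          simp only [hwdef]; ring
        rw [hw, abs_le]
        constructor
        · nlinarith
        · nlinarith [mul_le_mul_of_nonneg_left hki (by positivity : (0:ℝ) ≤ 3 * r n * L)]
      have hTsub : ∀ k, T k ⊆ Metric.closedBall z ρ := by
        intro k
        refine (hTball k).trans (Metric.closedBall_subset_closedBall' ?_)
        linarith [hwz k]
      have hTdisj : ∀ k k', k ≠ k' → Disjoint (T k) (T k') := by
        intro k k' hkk'
        rw [Set.disjoint_left]
        intro p hp hp'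
        obtain ⟨i, hi⟩ := Function.ne_iff.mp hkk'
        have h1 : dist (p i) (w k i) ≤ r n * L :=
          (dist_le_pi_dist p (w k) i).trans (Metric.mem_closedBall.mp (hTball k hp))
        have h2 : dist (p i) (w k' i) ≤ r n * L :=
          (dist_le_pi_dist p (w k') i).trans (Metric.mem_closedBall.mp (hTball k' hp'))
        have hne : ((k i : ℕ) : ℤ) ≠ ((k' i : ℕ) : ℤ) := by
          intro h
          exact hi (Fin.ext (by exact_mod_cast h))
        have habs : (1:ℝ) ≤ |((k i : ℕ) : ℝ) - ((k' i : ℕ) : ℝ)| := by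
          have h := Int.one_le_abs (sub_ne_zero.mpr hne)
          have h2 : (1:ℝ) ≤ |(((k i : ℕ) : ℤ) : ℝ) - (((k' i : ℕ) : ℤ) : ℝ)| := by
            exact_mod_cast h
          simpa using h2
        have h4 : dist (w k i) (w k' i) = 3 * r n * L * |((k i : ℕ) : ℝ) - ((k' i : ℕ) : ℝ)| := by
          rw [Real.dist_eq]
          have : w k i - w k' i = 3 * r n * L * (((k i : ℕ) : ℝ) - ((k' i : ℕ) : ℝ)) := by
            simp only [hwdef]; ring
          rw [this, abs_mul, abs_of_pos (by positivity : (0:ℝ) < 3 * r n * L)]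
        have h5 : dist (w k i) (w k' i) ≤ dist (w k i) (p i) + dist (p i) (w k' i) :=
          dist_triangle _ _ _
        rw [dist_comm (w k i) (p i)] at h5
        nlinarith [mul_le_mul_of_nonneg_left habs (by positivity : (0:ℝ) ≤ 3 * r n * L)]
      have hvolT : ∀ k, volume (T k) = ENNReal.ofReal (t n / n) := by
        intro k
        rw [hTdef]
        rw [vol_translate _ hrpos.le, hAbarvol, mul_one, hrd]
      -- probabilities
      set p : (Fin d → Fin m) → ℝ := fun k => (ν (T k)).toReal with hpdef
      have hp0 : ∀ k, 0 ≤ p k := fun k => ENNReal.toReal_nonneg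
      have hpq : ∀ k, p k ≤ q := by
        intro k
        have hle : ν (T k) ≤ ENNReal.ofReal (1-ε') * volume (T k) :=
          density_le f (hTmeas k) (hTsub k) (1-ε') hfS'
        rw [hvolT k, ← ENNReal.ofReal_mul (by linarith)] at hle
        calc p k ≤ (ENNReal.ofReal ((1-ε') * (t n / n))).toReal :=
              ENNReal.toReal_mono ENNReal.ofReal_ne_top hle
          _ = q := ENNReal.toReal_ofReal hq0
      set E : (Fin d → Fin m) → Set Ω :=
        fun k => ⋂ i ∈ Finset.Icc 1 n, X i ⁻¹' (T k)ᶜ with hEdef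
      have hEmeas : ∀ k, MeasurableSet (E k) :=
        fun k => MeasurableSet.biInter (Finset.Icc 1 n).countable_toSet
          (fun i _ => (hXmeas i) (hTmeas k).compl)
      have hcell : ∀ k, (P (E k)).toReal = (1 - p k)^n := by
        intro k
        rw [hEdef]
        exact cell_prob P X hXmeas hXindep ν hXf n (T k) (hTmeas k)
      have hpairT : ∀ k k', k ≠ k' →
          (P (E k ∩ E k')).toReal ≤ (P (E k)).toReal * (P (E k')).toReal := by
        intro k k' hkk'
        have hEE : E k ∩ E k' = ⋂ i ∈ Finset.Icc 1 n, X i ⁻¹' (T k ∪ T k')ᶜ := by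
          ext ω
          simp only [hEdef, Set.mem_inter_iff, Set.mem_iInter, Set.mem_preimage,
            Set.mem_compl_iff, Set.mem_union]
          constructor
          · rintro ⟨hA, hB⟩ i hi
            push_neg
            exact ⟨hA i hi, hB i hi⟩
          · intro h
            constructor
            · intro i hi; exact fun hT => (h i hi) (Or.inl hT)
            · intro i hi; exact fun hT => (h i hi) (Or.inr hT)
        have hsum : (ν (T k ∪ T k')).toReal = p k + p k' := by
          rw [measure_union (hTdisj k k' hkk') (hTmeas k'),
            ENNReal.toReal_add (measure_ne_top _ _) (measure_ne_top _ _)]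
        have := cell_prob P X hXmeas hXindep ν hXf n (T k ∪ T k') ((hTmeas k).union (hTmeas k'))
        rw [hEE, this, hsum, hcell k, hcell k', ← mul_pow]
        apply pow_le_pow_left₀
        · have := hpq k; have := hpq k'; linarith
        · nlinarith [hp0 k, hp0 k', mul_nonneg (hp0 k) (hp0 k')]
      -- second moment bound
      have hSM := second_moment P Finset.univ E hEmeas
        (fun j _ k _ hjk => hpairT j k hjk)
      set S : ℝ := ∑ k : Fin d → Fin m, (P (E k)).toReal with hSdef
      -- lower bound each cell probability
      have hen : ∀ k, Real.exp (-((1 - ε'/2) * t n)) ≤ (P (E k)).toReal := by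
        intro k
        rw [hcell k]
        have step2 : Real.exp (-(q/(1-q))) ≤ 1 - q := exp_le_one_sub hq0 hq1
        have step1 : (1-q)^n ≤ (1 - p k)^n :=
          pow_le_pow_left₀ (by linarith) (by linarith [hpq k]) n
        have step3 : (n:ℝ) * (q/(1-q)) ≤ (1 - ε'/2) * t n := by
          have hnq : (n:ℝ) * q = (1-ε') * t n := by
            rw [hqdef]
            field_simp
          have h1qpos : (0:ℝ) < 1 - q := by linarith
          rw [mul_div_assoc', hnq, div_le_iff₀ h1qpos]
          have hfac : (1-ε') ≤ (1-ε'/2)*(1-q) := by nlinarith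
          nlinarith [mul_le_mul_of_nonneg_right hfac htpos.le]
        calc Real.exp (-((1 - ε'/2) * t n)) ≤ Real.exp (-((n:ℝ) * (q/(1-q)))) := by
              apply Real.exp_le_exp.mpr; linarith
          _ = Real.exp (-(q/(1-q))) ^ n := by
              rw [← Real.exp_nat_mul]; ring_nf
          _ ≤ (1-q)^n := pow_le_pow_left₀ (Real.exp_pos _).le step2 n
          _ ≤ (1 - p k)^n := step1
      set en : ℝ := Real.exp (-((1 - ε'/2) * t n)) with hendef
      have henpos : 0 < en := Real.exp_pos _
      have hcard : (Fintype.card (Fin d → Fin m) : ℝ) = (m:ℝ)^d := by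
        rw [Fintype.card_fun]
        push_cast
        simp
      have hSlow : Cst * (n / t n) * en ≤ S := by
        have h1 : ((m:ℝ))^d * en ≤ S := by
          calc ((m:ℝ))^d * en = (Fintype.card (Fin d → Fin m) : ℝ) * en := by rw [hcard]
            _ = ∑ _k : Fin d → Fin m, en := by
                rw [Finset.sum_const, Finset.card_univ, nsmul_eq_mul]
            _ ≤ S := Finset.sum_le_sum (fun k _ => hen k)
        have h2 : Cst * (n / t n) ≤ ((m:ℝ))^d := by
          have hx2' : ρ/(6 * r n * L) = x/2 := by
            rw [hxdef]; ring
          have h3 : (ρ/(6 * r n * L))^d ≤ ((m:ℝ))^d := by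
            apply pow_le_pow_left₀ (by positivity)
            rw [hx2']; exact hmge
          calc Cst * (n / t n) = (ρ/(6 * r n * L))^d := by
                rw [hCstdef]
                rw [show ρ/(6 * r n * L) = (ρ/(6*L)) * (1 / r n) from by ring]
                rw [mul_pow]
                congr 1
                rw [one_div, inv_pow, hrd]
                field_simp
            _ ≤ ((m:ℝ))^d := h3
        calc Cst * (n / t n) * en ≤ ((m:ℝ))^d * en :=
              mul_le_mul_of_nonneg_right h2 henpos.le
          _ ≤ S := h1
      have hFpos : 0 < F n := by
        rw [hFdef]
        positivity
      have hFinv : 1 / F n = Cst * (n / t n) * en := by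
        rw [hFdef, hendef, Real.exp_neg]
        field_simp
      have hSpos : 0 < S := by
        rw [← hFinv] at hSlow
        calc (0:ℝ) < 1 / F n := by positivity
          _ ≤ S := hSlow
      -- conclude
      set G : Set Ω := ⋃ k, E k with hGdef
      have hGmeas : MeasurableSet G := MeasurableSet.iUnion (fun k => hEmeas k)
      have hGc : ⋂ j ∈ (Finset.univ : Finset (Fin d → Fin m)), (E j)ᶜ = Gᶜ := by
        rw [hGdef, Set.compl_iUnion]
        simp
      rw [hGc] at hSM
      have hPGc : (P Gᶜ).toReal ≤ F n := by
        have hx1 : (P Gᶜ).toReal * S ≤ 1 := by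
          nlinarith [ENNReal.toReal_nonneg (a := P Gᶜ)]
        have h1S : 1/S ≤ F n := by
          rw [div_le_iff₀ hSpos]
          calc (1:ℝ) = F n * (1/F n) := by field_simp
            _ ≤ F n * S := by
                apply mul_le_mul_of_nonneg_left _ hFpos.le
                rw [hFinv]; exact hSlow
        calc (P Gᶜ).toReal ≤ 1/S := by
              rw [le_div_iff₀ hSpos]; exact hx1
          _ ≤ F n := h1S
      have hPG : 1 - F n ≤ (P G).toReal := by
        have hsum : (P G).toReal + (P Gᶜ).toReal = 1 := by
          rw [← ENNReal.toReal_add (measure_ne_top _ _) (measure_ne_top _ _),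
            measure_add_measure_compl hGmeas, measure_univ, ENNReal.toReal_one]
        linarith
      -- G is a subset of the target event
      have hsubset : G ⊆ {ω | c < (n : ℝ) * V n ω - Real.log n - b * Real.log (Real.log n)} := by
        intro ω hω
        obtain ⟨k, hk⟩ := Set.mem_iUnion.mp hω
        set Q : Set (Fin d → ℝ) := (fun i => X i ω) '' Set.Icc 1 n with hQdef
        have hmem : r n ∈ {s : ℝ | 0 ≤ s ∧ ∃ x : Fin d → ℝ,
            (fun y => x + s • y) '' A ⊆ K \ Q} := by
          refine ⟨hrpos.le, w k - r n • a₀, ?_⟩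
          rintro _ ⟨y, hyA, rfl⟩
          have hyT : (w k - r n • a₀) + r n • y ∈ T k := ⟨y, subset_closure hyA, rfl⟩
          refine ⟨hSK (hTsub k hyT), ?_⟩
          rintro ⟨i, hiIcc, hieq⟩
          have hnotT : X i ω ∉ T k := by
            have hki := Set.mem_iInter₂.mp hk i (Finset.mem_Icc.mpr ⟨hiIcc.1, hiIcc.2⟩)
            exact hki
          apply hnotT
          rw [show X i ω = w k - r n • a₀ + r n • y from hieq]
          exact hyT
        have hΔ : r n ≤ maxSpacing d K A Q := le_csSup (hbdd Q) hmem
        have hΔ0 : (0:ℝ) ≤ maxSpacing d K A Q := le_trans hrpos.le hΔ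
        have hVge : t n / n ≤ V n ω := by
          rw [hV n ω, ← hQdef, ← hrd]
          exact pow_le_pow_left₀ hrpos.le hΔ d
        have htle : t n ≤ (n:ℝ) * V n ω := by
          calc t n = (n:ℝ) * (t n / n) := by field_simp
            _ ≤ (n:ℝ) * V n ω := mul_le_mul_of_nonneg_left hVge hnpos.le
        simp only [Set.mem_setOf_eq]
        have : t n = Real.log n + b * Real.log (Real.log n) + (c+1) := rfl
        linarith
      calc ENNReal.ofReal (1 - F n) ≤ ENNReal.ofReal ((P G).toReal) :=
            ENNReal.ofReal_le_ofReal hPG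
        _ = P G := ENNReal.ofReal_toReal (measure_ne_top _ _)
        _ ≤ P {ω | c < (n : ℝ) * V n ω - Real.log n - b * Real.log (Real.log n)} :=
            measure_mono hsubset
    -- squeeze
    have hupper : Tendsto (fun n : ℕ => ENNReal.ofReal (1 - F n)) atTop (nhds 1) := by
      have h1 : Tendsto (fun n : ℕ => 1 - F n) atTop (nhds 1) := by
        have h0 := (tendsto_const_nhds : Tendsto (fun _ : ℕ => (1:ℝ)) atTop (nhds 1)).sub hFlim
        simpa using h0
      have h2 := (ENNReal.continuous_ofReal.tendsto 1).comp h1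
      simpa [Function.comp_def] using h2
    apply tendsto_of_tendsto_of_tendsto_of_le_of_le' hupper tendsto_const_nhds
    · filter_upwards [htlim.eventually_ge_atTop 1,
        (NormedAddCommGroup.tendsto_nhds_zero.mp htn) (ε'/4) (by positivity),
        (NormedAddCommGroup.tendsto_nhds_zero.mp hrlim) (ρ/(6*L)) (by positivity),
        eventually_ge_atTop 1] with n h1 h2 h3 h4
      exact hmain n h1 (by simpa using h2) (by simpa using h3) h4
    · exact Eventually.of_forall (fun n => prob_le_one)
  refine ⟨key, ?_⟩
  -- ========== PART 2 ==========
  intro g β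
  have heq : ∀ᶠ n : ℕ in atTop,
      P {ω | (g + Real.log n + ((d : ℝ) - 1) * Real.log (Real.log n) + β) / n < V n ω}
        = P {ω | (g+β) < (n : ℝ) * V n ω - Real.log n - ((d : ℝ) - 1) * Real.log (Real.log n)} := by
    filter_upwards [eventually_ge_atTop 1] with n hn
    have hnpos : (0:ℝ) < n := by exact_mod_cast hn
    congr 1
    ext ω
    simp only [Set.mem_setOf_eq]
    rw [div_lt_iff₀ hnpos]
    constructor
    · intro h; nlinarith
    · intro h; nlinarith
  exact Tendsto.congr' (heq.mono (fun n h => h.symm)) (key (g+β))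
end

section
/- Let (V_m)_{m≥1} be nonnegative random variables with m V_m / log m → 1 almost surely as m → ∞. Let (k_n) be positive integers with 0 < a ≤ k_n/n ≤ b < ∞ for all n and some constants a, b, and let (L_n) be positive-integer-valued random variables with L_n = k_n + O_P(√n) and L_n → ∞ almost surely. Then (L_n − k_n) · V_{L_n} → 0 in probability as n → ∞. -/
open MeasureTheory Filter

set_option maxHeartbeats 1600000

private lemma aux_sqrt_eq (M a Lg s nn : ℝ) (hs : s * s = nn) (hs0 : s ≠ 0) (ha : a ≠ 0) :
    M * s * (2 * Lg / (a / 2 * nn)) = 4 * M / a * (Lg / s) := by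
  subst hs; field_simp; ring

/-- If `m V_m / log m → 1` a.s., `kₙ ≍ n`, `Lₙ = kₙ + O_P(√n)` and `Lₙ → ∞` a.s.,
then `(Lₙ − kₙ) · V_{Lₙ} → 0` in probability. -/
theorem sample_size_difference_times_spacing_in_probability
    {Ω : Type*} [MeasurableSpace Ω] (P : Measure Ω) [IsProbabilityMeasure P]
    (V : ℕ → Ω → ℝ) (hVm : ∀ m, Measurable (V m)) (hVnonneg : ∀ m ω, 0 ≤ V m ω)
    (has : ∀ᵐ ω ∂P, Tendsto (fun m : ℕ => (m : ℝ) * V m ω / Real.log m) atTop (nhds 1))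
    (k : ℕ → ℕ) (hk1 : ∀ n, 1 ≤ k n) (a b : ℝ) (ha : 0 < a)
    (hk : ∀ n : ℕ, 1 ≤ n → a ≤ (k n : ℝ) / n ∧ (k n : ℝ) / n ≤ b)
    (L : ℕ → Ω → ℕ) (hLm : ∀ n, Measurable (L n)) (hL1 : ∀ n ω, 1 ≤ L n ω)
    -- `Lₙ = kₙ + O_P(√n)`:
    (hLO : ∀ δ : ℝ, 0 < δ → ∃ M : ℝ, ∀ n : ℕ,
      P {ω | M * Real.sqrt n < |(L n ω : ℝ) - (k n : ℝ)|} ≤ ENNReal.ofReal δ)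
    (hLinf : ∀ᵐ ω ∂P, Tendsto (fun n : ℕ => L n ω) atTop atTop) :
    ∀ δ : ℝ, 0 < δ → Tendsto (fun n : ℕ =>
        P {ω | δ < |((L n ω : ℝ) - (k n : ℝ)) * V (L n ω) ω|}) atTop (nhds 0) := by
  intro δ hδ
  -- it suffices to bound the measures eventually by every positive real
  have key : ∀ ε' : ℝ, 0 < ε' → ∀ᶠ n in atTop,
      P {ω | δ < |((L n ω : ℝ) - (k n : ℝ)) * V (L n ω) ω|} ≤ ENNReal.ofReal ε' := by
    intro ε' hε'
    obtain ⟨M₀, hM₀⟩ := hLO (ε' / 2) (by positivity)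
    set M : ℝ := max M₀ 1 with hMdef
    have hM1 : (1 : ℝ) ≤ M := le_max_right _ _
    have hMpos : (0 : ℝ) < M := lt_of_lt_of_le one_pos hM1
    have hBad : ∀ n : ℕ, P {ω | M * Real.sqrt n < |(L n ω : ℝ) - (k n : ℝ)|}
        ≤ ENNReal.ofReal (ε' / 2) := by
      intro n
      refine le_trans (measure_mono ?_) (hM₀ n)
      intro ω hω
      exact lt_of_le_of_lt (mul_le_mul_of_nonneg_right (le_max_left _ _)
        (Real.sqrt_nonneg _)) hω
    have hab : a ≤ b := by
      have h1 := hk 1 le_rfl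
      exact le_trans h1.1 h1.2
    have hbM : (0 : ℝ) < b + M := by linarith
    -- the deterministic bound sequence
    set c : ℕ → ℝ := fun n => (4 * M / a) * (Real.log ((b + M) * n) / Real.sqrt n) with hcdef
    have hsqrt_tendsto : Tendsto (fun n : ℕ => Real.sqrt n) atTop atTop := by
      have h1 : Tendsto (fun x : ℝ => x ^ (1/2 : ℝ)) atTop atTop :=
        tendsto_rpow_atTop (by norm_num)
      have h2 : Tendsto (fun n : ℕ => ((n : ℝ) ^ (1/2 : ℝ))) atTop atTop :=
        h1.comp tendsto_natCast_atTop_atTop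
      refine h2.congr fun n => ?_
      rw [Real.sqrt_eq_rpow]
    have hc0 : Tendsto c atTop (nhds 0) := by
      have hlog : Tendsto (fun n : ℕ => Real.log ((b + M) * n) / Real.sqrt n) atTop (nhds 0) := by
        have hA : Tendsto (fun n : ℕ => Real.log (b + M) / Real.sqrt n) atTop (nhds 0) :=
          tendsto_const_nhds.div_atTop hsqrt_tendsto
        have hB : Tendsto (fun n : ℕ => Real.log n / Real.sqrt n) atTop (nhds 0) := by
          have h1 : Tendsto (fun x : ℝ => Real.log x / x ^ (1/2 : ℝ)) atTop (nhds 0) :=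
            (isLittleO_log_rpow_atTop (by norm_num : (0:ℝ) < 1/2)).tendsto_div_nhds_zero
          have h2 := h1.comp tendsto_natCast_atTop_atTop
          refine h2.congr fun n => ?_
          rw [Function.comp_apply, Real.sqrt_eq_rpow]
        have hsum := hA.add hB
        rw [add_zero] at hsum
        refine hsum.congr' ?_
        filter_upwards [eventually_ge_atTop 1] with n hn
        have hn0 : (0 : ℝ) < (n : ℝ) := by exact_mod_cast hn
        rw [← add_div, ← Real.log_mul (ne_of_gt hbM) (ne_of_gt hn0)]
      have := hlog.const_mul (4 * M / a)
      rw [mul_zero] at this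
      exact this
    -- measurability of ω ↦ V (L n ω) ω
    have hgmeas : ∀ n : ℕ, Measurable fun ω => V (L n ω) ω := by
      intro n
      have huncurry : Measurable fun p : Ω × ℕ => V p.2 p.1 :=
        measurable_from_prod_countable_left fun m => hVm m
      exact huncurry.comp (measurable_id.prodMk (hLm n))
    -- the "good" event and the truncated variable
    set Good : ℕ → Set Ω := fun n => {ω | |(L n ω : ℝ) - (k n : ℝ)| ≤ M * Real.sqrt n}
      with hGooddef
    have hGoodmeas : ∀ n, MeasurableSet (Good n) := by
      intro n
      have hf : Measurable fun ω => |(L n ω : ℝ) - (k n : ℝ)| :=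
        ((measurable_from_top.comp (hLm n)).sub measurable_const).abs
      exact measurableSet_le hf measurable_const
    set Y : ℕ → Ω → ℝ := fun n =>
      (Good n).indicator (fun ω => ((L n ω : ℝ) - (k n : ℝ)) * V (L n ω) ω) with hYdef
    have hYmeas : ∀ n, Measurable (Y n) := by
      intro n
      exact (((measurable_from_top.comp (hLm n)).sub measurable_const).mul
        (hgmeas n)).indicator (hGoodmeas n)
    -- a.s. convergence of Y to 0
    have hae : ∀ᵐ ω ∂P, Tendsto (fun n => Y n ω) atTop (nhds 0) := by
      filter_upwards [has, hLinf] with ω hV hL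
      have hev : ∀ᶠ m : ℕ in atTop, (m : ℝ) * V m ω / Real.log m ≤ 2 ∧ 3 ≤ m :=
        (hV.eventually (eventually_le_nhds one_lt_two)).and (eventually_ge_atTop 3)
      obtain ⟨m₀, hm₀⟩ := eventually_atTop.mp hev
      have hVbound : ∀ m, m₀ ≤ m → V m ω ≤ 2 * Real.log m / m := by
        intro m hm
        obtain ⟨h2, h3⟩ := hm₀ m hm
        have hm3 : (3 : ℝ) ≤ (m : ℝ) := by exact_mod_cast h3
        have hmpos : (0 : ℝ) < (m : ℝ) := by linarith
        have hlogpos : 0 < Real.log m := Real.log_pos (by linarith)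
        have := (div_le_iff₀ hlogpos).mp h2
        rw [le_div_iff₀ hmpos]
        linarith
      refine squeeze_zero_norm' ?_ hc0
      have hsq_ev : ∀ᶠ n : ℕ in atTop, 2 * M / a ≤ Real.sqrt n :=
        hsqrt_tendsto.eventually_ge_atTop _
      filter_upwards [hL.eventually (eventually_ge_atTop m₀), eventually_ge_atTop 1, hsq_ev]
        with n hLn hn1 hsqn
      have hn0 : (0 : ℝ) < (n : ℝ) := by exact_mod_cast hn1
      have hsqpos : 0 < Real.sqrt n := Real.sqrt_pos.mpr hn0
      have hn1' : (1 : ℝ) ≤ (n : ℝ) := by exact_mod_cast hn1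
      have hcn_nonneg : 0 ≤ c n := by
        have h1 : (1 : ℝ) ≤ (b + M) * n := by nlinarith [hn1', hM1, ha, hab]
        have : (0 : ℝ) ≤ Real.log ((b + M) * n) := Real.log_nonneg h1
        have h4M : (0 : ℝ) < 4 * M / a := by positivity
        positivity
      by_cases hω : ω ∈ Good n
      · rw [hYdef]
        simp only [Set.indicator_of_mem hω]
        have hGω : |(L n ω : ℝ) - (k n : ℝ)| ≤ M * Real.sqrt n := hω
        set ℓ : ℕ := L n ω with hldef
        have hℓ3 : (3 : ℕ) ≤ ℓ := (hm₀ ℓ hLn).2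
        have hℓ1 : (1 : ℝ) ≤ (ℓ : ℝ) := by exact_mod_cast le_trans (by norm_num) hℓ3
        -- bounds on k n
        have hkn_lb : a * n ≤ (k n : ℝ) := by
          have := (hk n hn1).1
          calc a * n ≤ ((k n : ℝ) / n) * n := by
                exact mul_le_mul_of_nonneg_right this (le_of_lt hn0)
            _ = (k n : ℝ) := by field_simp
        have hkn_ub : (k n : ℝ) ≤ b * n := by
          have := (hk n hn1).2
          calc (k n : ℝ) = ((k n : ℝ) / n) * n := by field_simp
            _ ≤ b * n := mul_le_mul_of_nonneg_right this (le_of_lt hn0)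
        have habs := abs_le.mp hGω
        have hMsq : M * Real.sqrt n ≤ (a / 2) * n := by
          have : 2 * M / a ≤ Real.sqrt n := hsqn
          have h2 : 2 * M ≤ a * Real.sqrt n := by
            rw [div_le_iff₀ ha] at this; linarith
          nlinarith [Real.mul_self_sqrt (le_of_lt hn0) , hsqpos]
        have hℓlb : (a / 2) * n ≤ (ℓ : ℝ) := by
          have : (k n : ℝ) - (ℓ : ℝ) ≤ M * Real.sqrt n := by linarith [habs.1]
          linarith
        have hℓub : (ℓ : ℝ) ≤ (b + M) * n := by
          have h1 : (ℓ : ℝ) - (k n : ℝ) ≤ M * Real.sqrt n := habs.2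
          have hsqle : Real.sqrt n ≤ (n : ℝ) := by
            nth_rewrite 2 [← Real.mul_self_sqrt (le_of_lt hn0)]
            nlinarith [Real.one_le_sqrt.mpr (by exact_mod_cast hn1 : (1:ℝ) ≤ (n:ℝ)), hsqpos]
          have h2 : M * Real.sqrt n ≤ M * n :=
            mul_le_mul_of_nonneg_left hsqle hMpos.le
          linarith
        have hVb : V ℓ ω ≤ 2 * Real.log ℓ / ℓ := hVbound ℓ hLn
        have hlogℓ_nonneg : 0 ≤ Real.log ℓ := Real.log_nonneg hℓ1
        have hloglog : Real.log ℓ ≤ Real.log ((b + M) * n) :=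
          Real.log_le_log (by linarith) hℓub
        have hlogbn_nonneg : 0 ≤ Real.log ((b + M) * n) := le_trans hlogℓ_nonneg hloglog
        have hdiv : 2 * Real.log ℓ / ℓ ≤ 2 * Real.log ((b + M) * n) / ((a / 2) * n) := by
          apply div_le_div₀ (by linarith) (by linarith) (by positivity) hℓlb
        have habsmul : |((ℓ : ℝ) - (k n : ℝ)) * V ℓ ω|
            = |(ℓ : ℝ) - (k n : ℝ)| * V ℓ ω := by
          rw [abs_mul, abs_of_nonneg (hVnonneg ℓ ω)]
        rw [Real.norm_eq_abs, habsmul]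
        have hstep : |(ℓ : ℝ) - (k n : ℝ)| * V ℓ ω
            ≤ (M * Real.sqrt n) * (2 * Real.log ((b + M) * n) / ((a / 2) * n)) := by
          apply mul_le_mul hGω (le_trans hVb hdiv) (hVnonneg ℓ ω) (by positivity)
        refine le_trans hstep (le_of_eq ?_)
        rw [hcdef]
        exact aux_sqrt_eq M a _ _ _ (Real.mul_self_sqrt (le_of_lt hn0))
          (ne_of_gt hsqpos) (ne_of_gt ha)
      · rw [hYdef]
        simp only [Set.indicator_of_notMem hω]
        simpa using hcn_nonneg
    -- convergence in measure
    have hTIM := MeasureTheory.tendstoInMeasure_of_tendsto_ae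
      (f := Y) (g := fun _ => (0 : ℝ)) (μ := P)
      (fun n => (hYmeas n).aestronglyMeasurable) hae
    have h2 := tendstoInMeasure_iff_dist.mp hTIM δ hδ
    have hofpos : (0 : ENNReal) < ENNReal.ofReal (ε' / 2) := ENNReal.ofReal_pos.mpr (by positivity)
    have h3 : ∀ᶠ n in atTop, P {ω | δ ≤ dist (Y n ω) 0} ≤ ENNReal.ofReal (ε' / 2) := by
      filter_upwards [h2.eventually_lt_const hofpos] with n hn
      exact le_of_lt hn
    filter_upwards [h3] with n hn
    have hsubset : {ω | δ < |((L n ω : ℝ) - (k n : ℝ)) * V (L n ω) ω|} ⊆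
        {ω | M * Real.sqrt n < |(L n ω : ℝ) - (k n : ℝ)|} ∪ {ω | δ ≤ dist (Y n ω) 0} := by
      intro ω hω
      by_cases hg : ω ∈ Good n
      · right
        have : Y n ω = ((L n ω : ℝ) - (k n : ℝ)) * V (L n ω) ω := by
          rw [hYdef]; simp [Set.indicator_of_mem hg]
        simp only [Set.mem_setOf_eq, dist_zero_right, Real.norm_eq_abs, this]
        exact le_of_lt hω
      · left
        simp only [hGooddef, Set.mem_setOf_eq, not_le] at hg
        exact hg
    calc P {ω | δ < |((L n ω : ℝ) - (k n : ℝ)) * V (L n ω) ω|}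
        ≤ P ({ω | M * Real.sqrt n < |(L n ω : ℝ) - (k n : ℝ)|} ∪ {ω | δ ≤ dist (Y n ω) 0}) :=
          measure_mono hsubset
      _ ≤ P {ω | M * Real.sqrt n < |(L n ω : ℝ) - (k n : ℝ)|} + P {ω | δ ≤ dist (Y n ω) 0} :=
          measure_union_le _ _
      _ ≤ ENNReal.ofReal (ε' / 2) + ENNReal.ofReal (ε' / 2) := add_le_add (hBad n) hn
      _ = ENNReal.ofReal ε' := by
          rw [← ENNReal.ofReal_add (by positivity) (by positivity)]; ring_nf
  -- conclude
  rw [ENNReal.tendsto_atTop_zero]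
  intro ε hε
  obtain ⟨r, hr, hrε⟩ : ∃ r : ℝ, 0 < r ∧ ENNReal.ofReal r ≤ ε := by
    rcases eq_or_ne ε ⊤ with h | h
    · exact ⟨1, one_pos, by simp [h]⟩
    · exact ⟨ε.toReal, ENNReal.toReal_pos (ne_of_gt hε) h,
        le_of_eq (ENNReal.ofReal_toReal h)⟩
  obtain ⟨N, hN⟩ := eventually_atTop.mp (key r hr)
  exact ⟨N, fun n hn => le_trans (hN n hn) hrε⟩
end

section
/- Let X_1, X_2, ... be i.i.d. random vectors taking values in K, and suppose there exists a nonempty open set O ⊆ K with P( X_1 ∈ O ) = 0. Then there exists a constant c > 0 such that P( V_n ≥ c for all n ≥ 1 ) = 1; in particular, liminf_{n→∞} V_n > 0 almost surely, and for every sequence of positive reals (c_n) with c_n → 0 one has lim_{n→∞} P( V_n > c_n ) = 1, so the test based on V_n is consistent against every such alternative. -/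
open MeasureTheory Filter

/-- If the alternative distribution gives probability zero to a nonempty open subset
`O` of `K`, then almost surely every `Vₙ` is bounded below by some constant `c > 0`;
in particular `liminf Vₙ > 0` a.s., and `P(Vₙ > cₙ) → 1` for every positive null
sequence `(cₙ)`, so the spacings test is consistent against such alternatives. -/
theorem spacings_test_consistent_of_null_open_set
    (d : ℕ) (hd : 1 ≤ d)
    (K A : Set (Fin d → ℝ))
    (hKb : Bornology.IsBounded K) (hKvol : volume K = 1)
    (hKfr : volume (frontier K) = 0)
    (hAb : Bornology.IsBounded A) (hAconv : Convex ℝ A)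
    (hAint : (interior A).Nonempty) (hAvol : volume A = 1)
    {Ω : Type*} [MeasurableSpace Ω] (P : Measure Ω) [IsProbabilityMeasure P]
    (X : ℕ → Ω → (Fin d → ℝ)) (hXmeas : ∀ i, Measurable (X i))
    (hXK : ∀ i ω, X i ω ∈ K)
    (hXindep : ProbabilityTheory.iIndepFun X P)
    (hXident : ∀ i, Measure.map (X i) P = Measure.map (X 1) P)
    (O : Set (Fin d → ℝ)) (hO : IsOpen O) (hOne : O.Nonempty) (hOK : O ⊆ K)
    (hOnull : P {ω | X 1 ω ∈ O} = 0)
    (V : ℕ → Ω → ℝ)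
    (hV : ∀ n ω, V n ω = (maxSpacing d K A ((fun i => X i ω) '' Set.Icc 1 n)) ^ d) :
    (∃ c : ℝ, 0 < c ∧ P {ω | ∀ n : ℕ, 1 ≤ n → c ≤ V n ω} = 1) ∧
    (∀ᵐ ω ∂P, 0 < Filter.liminf (fun n : ℕ => V n ω) atTop) ∧
    (∀ cs : ℕ → ℝ, (∀ n, 0 < cs n) → Tendsto cs atTop (nhds 0) →
      Tendsto (fun n : ℕ => P {ω | cs n < V n ω}) atTop (nhds 1)) := by
  haveI : Nonempty (Fin d) := ⟨⟨0, hd⟩⟩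
  classical
  -- outer bound for K
  obtain ⟨M, hM0, hKM⟩ : ∃ M : ℝ, 0 ≤ M ∧ K ⊆ Metric.closedBall 0 M := by
    obtain ⟨M, hM⟩ := hKb.subset_closedBall 0
    exact ⟨max M 0, le_max_right _ _,
      hM.trans (Metric.closedBall_subset_closedBall (le_max_left _ _))⟩
  -- inner ball in A
  obtain ⟨a₀, ε, hε0, hballA⟩ : ∃ (a₀ : Fin d → ℝ) (ε : ℝ), 0 < ε ∧ Metric.ball a₀ ε ⊆ A := by
    obtain ⟨a₀, ha₀⟩ := hAint
    obtain ⟨ε, hε, h⟩ := Metric.isOpen_iff.1 isOpen_interior a₀ ha₀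
    exact ⟨a₀, ε, hε, h.trans interior_subset⟩
  set e : Fin d → ℝ := fun _ => (1 : ℝ) with he_def
  have he : ‖e‖ = 1 := by
    rw [he_def]
    simpa using Pi.norm_const (1 : ℝ)
  set B : ℝ := 2 * M / ε with hB_def
  have hB0 : 0 ≤ B := by positivity
  have hSbdd : ∀ Q : Set (Fin d → ℝ), ∀ r : ℝ,
      (0 ≤ r ∧ ∃ x : Fin d → ℝ, (fun y => x + r • y) '' A ⊆ K \ Q) → r ≤ B := by
    rintro Q r ⟨hr, x, himg⟩
    set v : Fin d → ℝ := (ε / 2) • e with hv_def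
    have hv : ‖v‖ = ε / 2 := by
      rw [hv_def, norm_smul, he, Real.norm_eq_abs, abs_of_pos (by linarith), mul_one]
    have hmem : ∀ w : Fin d → ℝ, ‖w‖ = ε / 2 → x + r • (a₀ + w) ∈ K := by
      intro w hw
      have hwA : a₀ + w ∈ A := hballA (by
        simp only [Metric.mem_ball, dist_eq_norm, add_sub_cancel_left, hw]
        linarith)
      exact (himg ⟨a₀ + w, hwA, rfl⟩).1
    have hp2 := hmem v hv
    have hm2 := hmem (-v) (by rw [norm_neg]; exact hv)
    have hdiff : (x + r • (a₀ + v)) - (x + r • (a₀ + -v)) = r • ((2 : ℝ) • v) := by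
      module
    have hnorm : ‖(x + r • (a₀ + v)) - (x + r • (a₀ + -v))‖ = r * ε := by
      rw [hdiff, norm_smul, norm_smul, hv, Real.norm_eq_abs, Real.norm_eq_abs,
        abs_of_nonneg hr, abs_of_nonneg (by norm_num : (0:ℝ) ≤ 2)]
      ring
    have hle : ‖(x + r • (a₀ + v)) - (x + r • (a₀ + -v))‖ ≤ 2 * M := by
      have h1 : dist (x + r • (a₀ + v)) 0 ≤ M := hKM hp2
      have h2 : dist (x + r • (a₀ + -v)) 0 ≤ M := hKM hm2
      calc ‖(x + r • (a₀ + v)) - (x + r • (a₀ + -v))‖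
          = dist (x + r • (a₀ + v)) (x + r • (a₀ + -v)) := (dist_eq_norm _ _).symm
        _ ≤ dist (x + r • (a₀ + v)) 0 + dist 0 (x + r • (a₀ + -v)) := dist_triangle _ _ _
        _ ≤ M + M := add_le_add h1 (by rw [dist_comm]; exact h2)
        _ = 2 * M := by ring
    rw [hnorm] at hle
    rw [hB_def, le_div_iff₀ hε0]
    linarith
  have hSup_le : ∀ Q : Set (Fin d → ℝ), maxSpacing d K A Q ≤ B := fun Q =>
    Real.sSup_le (fun r hr => hSbdd Q r hr) hB0
  -- inner data for O
  obtain ⟨x₀, hx₀⟩ := hOne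
  obtain ⟨ρ, hρ0, hballO⟩ := Metric.isOpen_iff.1 hO x₀ hx₀
  obtain ⟨R, hR1, hAR⟩ : ∃ R : ℝ, 1 ≤ R ∧ A ⊆ Metric.closedBall 0 R := by
    obtain ⟨R, hR⟩ := hAb.subset_closedBall 0
    exact ⟨max R 1, le_max_right _ _,
      hR.trans (Metric.closedBall_subset_closedBall (le_max_left _ _))⟩
  have hR0 : 0 < R := lt_of_lt_of_le one_pos hR1
  set r₀ : ℝ := ρ / (2 * R) with hr₀_def
  have hr₀ : 0 < r₀ := by positivity
  have hlow : ∀ Q : Set (Fin d → ℝ), Disjoint Q O → r₀ ≤ maxSpacing d K A Q := by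
    intro Q hQ
    refine le_csSup ⟨B, fun r hr => hSbdd Q r hr⟩ ⟨hr₀.le, x₀, ?_⟩
    rintro _ ⟨y, hy, rfl⟩
    have hyR : ‖y‖ ≤ R := by simpa [Metric.mem_closedBall, dist_eq_norm] using hAR hy
    have hmemO : x₀ + r₀ • y ∈ O := by
      apply hballO
      simp only [Metric.mem_ball, dist_eq_norm, add_sub_cancel_left, norm_smul,
        Real.norm_eq_abs, abs_of_pos hr₀]
      have h1 : r₀ * ‖y‖ ≤ r₀ * R := by nlinarith
      have h2 : r₀ * R = ρ / 2 := by
        rw [hr₀_def]; field_simp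
      linarith
    exact ⟨hOK hmemO, fun hmemQ => Set.disjoint_left.1 hQ hmemQ hmemO⟩
  -- the good event
  set G : Set Ω := {ω | ∀ i : ℕ, X i ω ∉ O} with hG_def
  have hGnull : P Gᶜ = 0 := by
    have hGc : Gᶜ = ⋃ i : ℕ, X i ⁻¹' O := by
      ext ω
      simp [hG_def, Set.mem_iUnion]
    rw [hGc]
    refine measure_iUnion_null fun i => ?_
    have h1 : P (X i ⁻¹' O) = (Measure.map (X i) P) O :=
      (Measure.map_apply (hXmeas i) hO.measurableSet).symm
    rw [h1, hXident i, Measure.map_apply (hXmeas 1) hO.measurableSet]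
    exact hOnull
  have hPG : P G = 1 := by
    have hGmeas : MeasurableSet G := by
      have : G = ⋂ i : ℕ, X i ⁻¹' Oᶜ := by ext ω; simp [hG_def]
      rw [this]
      exact MeasurableSet.iInter fun i => (hXmeas i) hO.measurableSet.compl
    have h := measure_add_measure_compl (μ := P) hGmeas
    rw [hGnull, add_zero] at h
    simpa using h
  set c : ℝ := r₀ ^ d with hc_def
  have hc0 : 0 < c := pow_pos hr₀ d
  have hkey : ∀ ω ∈ G, ∀ n : ℕ, c ≤ V n ω ∧ V n ω ≤ B ^ d := by
    intro ω hω n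
    have hdisj : Disjoint ((fun i => X i ω) '' Set.Icc 1 n) O := by
      rw [Set.disjoint_left]
      rintro _ ⟨i, hi, rfl⟩
      exact hω i
    have h1 : r₀ ≤ maxSpacing d K A ((fun i => X i ω) '' Set.Icc 1 n) := hlow _ hdisj
    have h2 : maxSpacing d K A ((fun i => X i ω) '' Set.Icc 1 n) ≤ B := hSup_le _
    rw [hV n ω]
    exact ⟨pow_le_pow_left₀ hr₀.le h1 d, pow_le_pow_left₀ (hr₀.le.trans h1) h2 d⟩
  refine ⟨⟨c, hc0, ?_⟩, ?_, ?_⟩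
  · refine le_antisymm prob_le_one ?_
    calc (1 : ENNReal) = P G := hPG.symm
      _ ≤ P {ω | ∀ n : ℕ, 1 ≤ n → c ≤ V n ω} :=
        measure_mono fun ω hω n _ => (hkey ω hω n).1
  · have hae : ∀ᵐ ω ∂P, ω ∈ G := mem_ae_iff.2 hGnull
    filter_upwards [hae] with ω hω
    have hev : ∀ᶠ n in atTop, c ≤ V n ω := Eventually.of_forall fun n => (hkey ω hω n).1
    have hbd : IsBoundedUnder (· ≤ ·) atTop fun n : ℕ => V n ω :=
      ⟨B ^ d, eventually_map.2 (Eventually.of_forall fun n => (hkey ω hω n).2)⟩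
    exact lt_of_lt_of_le hc0 (le_liminf_of_le hbd.isCoboundedUnder_ge hev)
  · intro cs hcs hcs0
    have hev : ∀ᶠ n in atTop, cs n < c := (tendsto_order.1 hcs0).2 c hc0
    have heq : ∀ᶠ n in atTop, P {ω | cs n < V n ω} = 1 := by
      filter_upwards [hev] with n hn
      refine le_antisymm prob_le_one ?_
      calc (1 : ENNReal) = P G := hPG.symm
        _ ≤ P {ω | cs n < V n ω} :=
          measure_mono fun ω hω => lt_of_lt_of_le hn (hkey ω hω n).1
    exact Tendsto.congr' (heq.mono fun n hn => hn.symm) tendsto_const_nhds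
end
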